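/- Two n-vertex graphs G and H are generalized cospectral if and only if G is cospectral with H and the overgraph G+e is cospectral with the overgraph H+e, where e denotes the all-ones vector of dimension n. -/

import Mathlib

open Matrix

noncomputable section

/-- The adjacency matrix of the complement graph: `J - I - A`. -/
def complMat {V : Type} [Fintype V] [DecidableEq V] (A : Matrix V V ℝ) : Matrix V V ℝ :=
  (Matrix.of fun _ _ => (1 : ℝ)) - 1 - A

/-- Two graphs, given by their adjacency matrices, are generalized cospectral if they are
cospectral and their complements are cospectral. -/
def GenCospectral {V : Type} [Fintype V] [DecidableEq V] (A B : Matrix V V ℝ) : Prop :=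
  A.charpoly = B.charpoly ∧ (complMat A).charpoly = (complMat B).charpoly

/-- The bordered matrix `[[A, b], [bᵀ, 0]]` (adjacency matrix of the overgraph `G + b`). -/
def border {V : Type} [Fintype V] [DecidableEq V] (A : Matrix V V ℝ) (b : V → ℝ) :
    Matrix (V ⊕ Unit) (V ⊕ Unit) ℝ :=
  Matrix.fromBlocks A (Matrix.of fun i _ => b i) (Matrix.of fun _ j => b j) 0

open Polynomial in
private lemma _helpers_marker : True := trivial

section Helpers
open Polynomial
variable {V : Type} [Fintype V] [DecidableEq V]

lemma eval_charpoly' (M : Matrix V V ℝ) (x : ℝ) :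
    M.charpoly.eval x = (x • (1 : Matrix V V ℝ) - M).det := by
  rw [Matrix.charpoly, ← Polynomial.coe_evalRingHom, RingHom.map_det]
  congr 1
  ext i j
  by_cases h : i = j <;>
    simp [Matrix.charmatrix_apply, Matrix.one_apply, Matrix.diagonal_apply, h]

/-- walk generating function -/
def wf (A : Matrix V V ℝ) (x : ℝ) : ℝ :=
  (fun _ => (1 : ℝ)) ⬝ᵥ ((x • (1 : Matrix V V ℝ) - A)⁻¹ *ᵥ fun _ => (1 : ℝ))

lemma unit_entry (N : Matrix V V ℝ) (u v : V → ℝ) :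
    (Matrix.replicateRow Unit u * N * Matrix.replicateCol Unit v) () () = u ⬝ᵥ N *ᵥ v := by
  simp [Matrix.mul_apply, Matrix.mulVec, dotProduct, Finset.mul_sum, Finset.sum_mul, mul_assoc]
  rw [Finset.sum_comm]

lemma border_eval (A : Matrix V V ℝ) (x : ℝ)
    (hd : ((x • (1 : Matrix V V ℝ)) - A).det ≠ 0) :
    (border A fun _ => (1 : ℝ)).charpoly.eval x
      = ((x • (1 : Matrix V V ℝ)) - A).det * (x - wf A x) := by
  rw [eval_charpoly']
  have hsplit : (x • (1 : Matrix (V ⊕ Unit) (V ⊕ Unit) ℝ) - border A fun _ => (1 : ℝ)) =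
      Matrix.fromBlocks (x • 1 - A) (-(Matrix.replicateCol Unit fun _ => (1 : ℝ)))
        (-(Matrix.replicateRow Unit fun _ => (1 : ℝ))) (x • 1) := by
    ext i j
    rcases i with i | i <;> rcases j with j | j <;>
      simp [border, Matrix.one_apply, Matrix.replicateCol, Matrix.replicateRow]
  rw [hsplit]
  haveI : Invertible (x • (1 : Matrix V V ℝ) - A) :=
    (x • (1 : Matrix V V ℝ) - A).invertibleOfIsUnitDet (isUnit_iff_ne_zero.mpr hd)
  rw [Matrix.det_fromBlocks₁₁, Matrix.invOf_eq_nonsing_inv]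
  congr 1
  rw [Matrix.det_unique]
  simp only [Matrix.neg_mul, Matrix.mul_neg, neg_neg, Matrix.sub_apply, Matrix.smul_apply,
    Matrix.one_apply_eq, smul_eq_mul, mul_one]
  rw [unit_entry]
  rfl

lemma neg_inv' (N : Matrix V V ℝ) (hd : N.det ≠ 0) : (-N)⁻¹ = -(N⁻¹) := by
  apply Matrix.inv_eq_right_inv
  rw [Matrix.neg_mul, Matrix.mul_neg, neg_neg,
    Matrix.mul_nonsing_inv _ (isUnit_iff_ne_zero.mpr hd)]

lemma compl_eval (A : Matrix V V ℝ) (x : ℝ)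
    (hd : ((x • (1 : Matrix V V ℝ)) - A).det ≠ 0) :
    (complMat A).charpoly.eval (-(x + 1))
      = (-1) ^ Fintype.card V * ((x • (1 : Matrix V V ℝ)) - A).det * (1 + wf A x) := by
  rw [eval_charpoly']
  set N := x • (1 : Matrix V V ℝ) - A with hN
  have hM : ((-(x + 1)) • (1 : Matrix V V ℝ) - complMat A) =
      (-N) + Matrix.replicateCol Unit (fun _ => (-1 : ℝ)) * Matrix.replicateRow Unit (fun _ => (1 : ℝ)) := by
    ext i j
    by_cases h : i = j <;>
      simp [hN, complMat, Matrix.one_apply, Matrix.mul_apply, Matrix.replicateCol, Matrix.replicateRow, h] <;> ring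
  have hd' : IsUnit (-N).det := by
    rw [Matrix.det_neg]
    exact (isUnit_iff_ne_zero.mpr (by positivity)).mul (isUnit_iff_ne_zero.mpr hd)
  have hcol : (Matrix.replicateCol Unit (fun _ => (-1 : ℝ)) : Matrix V Unit ℝ) =
      -(Matrix.replicateCol Unit fun _ => (1 : ℝ)) := by
    ext i j; simp [Matrix.replicateCol]
  have hu : ((1 : Matrix Unit Unit ℝ) + (Matrix.replicateRow Unit (fun _ => (1:ℝ)) : Matrix Unit V ℝ) * (-N)⁻¹ *
      (Matrix.replicateCol Unit (fun _ => (-1 : ℝ)) : Matrix V Unit ℝ)).det = 1 + wf A x := by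
    rw [Matrix.det_unique, neg_inv' _ hd, hcol]
    simp only [Matrix.mul_neg, Matrix.neg_mul, neg_neg, Matrix.add_apply, Matrix.one_apply_eq]
    rw [unit_entry]
    rfl
  rw [hM, Matrix.det_add_replicateCol_mul_replicateRow hd', hu, Matrix.det_neg, mul_assoc]

lemma poly_eq_of_eval_eq_cofinite {P Q : ℝ[X]} {S : Set ℝ} (hS : S.Finite)
    (h : ∀ x ∉ S, P.eval x = Q.eval x) : P = Q := by
  rw [← sub_eq_zero]
  apply Polynomial.eq_zero_of_infinite_isRoot
  apply Set.Infinite.mono _ hS.infinite_compl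
  intro x hx
  simp only [Set.mem_setOf_eq, Polynomial.IsRoot, Polynomial.eval_sub, sub_eq_zero]
  exact h x hx


end Helpers

/-- Corollary 4. Two graphs `G` and `H` are generalized cospectral if and
only if `G` is cospectral with `H` and the overgraph `G + e` is cospectral with `H + e`. -/
theorem genCospectral_iff_overgraph_allOnes_cospectral
    {n : ℕ} (A B : Matrix (Fin n) (Fin n) ℝ)
    (hA : A.IsAdjMatrix) (hB : B.IsAdjMatrix) :
    GenCospectral A B ↔
      A.charpoly = B.charpoly ∧
        (border A fun _ => (1 : ℝ)).charpoly = (border B fun _ => (1 : ℝ)).charpoly := by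
  unfold GenCospectral
  have hAne : A.charpoly ≠ 0 := A.charpoly_monic.ne_zero
  have hSA : {x : ℝ | A.charpoly.IsRoot x}.Finite := Polynomial.finite_setOf_isRoot hAne
  constructor
  · rintro ⟨h1, h2⟩
    refine ⟨h1, ?_⟩
    have hd : ∀ x : ℝ, ((x • (1 : Matrix (Fin n) (Fin n) ℝ)) - A).det =
        ((x • (1 : Matrix (Fin n) (Fin n) ℝ)) - B).det := fun x => by
      rw [← eval_charpoly', ← eval_charpoly', h1]
    have hW : ∀ x : ℝ, ((x • (1 : Matrix (Fin n) (Fin n) ℝ)) - A).det ≠ 0 →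
        wf A x = wf B x := by
      intro x hx
      have h := congrArg (Polynomial.eval (-(x + 1))) h2
      rw [compl_eval A x hx, compl_eval B x (by rw [← hd]; exact hx), ← hd] at h
      have hpow : ((-1 : ℝ)) ^ Fintype.card (Fin n) ≠ 0 := by positivity
      rw [mul_assoc, mul_assoc] at h
      have h' := mul_left_cancel₀ hx (mul_left_cancel₀ hpow h)
      linarith
    apply poly_eq_of_eval_eq_cofinite hSA
    intro x hx
    have hx' : ((x • (1 : Matrix (Fin n) (Fin n) ℝ)) - A).det ≠ 0 := by
      rw [← eval_charpoly']; exact hx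
    rw [border_eval A x hx', border_eval B x (by rw [← hd]; exact hx'), ← hd, hW x hx']
  · rintro ⟨h1, h2⟩
    refine ⟨h1, ?_⟩
    have hd : ∀ x : ℝ, ((x • (1 : Matrix (Fin n) (Fin n) ℝ)) - A).det =
        ((x • (1 : Matrix (Fin n) (Fin n) ℝ)) - B).det := fun x => by
      rw [← eval_charpoly', ← eval_charpoly', h1]
    have hW : ∀ x : ℝ, ((x • (1 : Matrix (Fin n) (Fin n) ℝ)) - A).det ≠ 0 →
        wf A x = wf B x := by
      intro x hx
      have h := congrArg (Polynomial.eval x) h2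
      rw [border_eval A x hx, border_eval B x (by rw [← hd]; exact hx), ← hd] at h
      have := mul_left_cancel₀ hx h
      linarith [this]
    have hSA' : {y : ℝ | A.charpoly.IsRoot (-(y + 1))}.Finite := by
      have : {y : ℝ | A.charpoly.IsRoot (-(y + 1))} =
          (fun y : ℝ => -(y + 1)) ⁻¹' {x : ℝ | A.charpoly.IsRoot x} := rfl
      rw [this]
      apply Set.Finite.preimage _ hSA
      intro a _ b _ hab
      simpa using hab
    apply poly_eq_of_eval_eq_cofinite hSA'
    intro y hy
    set x := -(y + 1) with hxdef
    have hx' : ((x • (1 : Matrix (Fin n) (Fin n) ℝ)) - A).det ≠ 0 := by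
      rw [← eval_charpoly']; exact hy
    have hyx : y = -(x + 1) := by rw [hxdef]; ring
    rw [hyx, compl_eval A x hx', compl_eval B x (by rw [← hd]; exact hx'), ← hd, hW x hx']
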